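/- Let m ≥ 1 and k ≥ 4 be integers and let q ∈ (1,2) satisfy |q − q_k| < q_k^{−(m+2)k−3}. With L_i(q), R_i(q) (0 ≤ i ≤ m), L_Q(q), R_Q(q) as below, let B(q) = ⋂_{i=0}^m [L_i(q), R_i(q)] ∩ [L_Q(q), R_Q(q)], let D_q = q^{−(m+1)k+2} π_q((1^{k−1}0)^∞) be the common length of these intervals, and set β_q = min{1/4, |B(q)|/D_q}, where |B(q)| is the length of the interval B(q). Then β_q > 1/8. -/

import Mathlib

open Set

/-- Projection map: the value of the (0-indexed) digit sequence `a` in base `q`,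
`π_q(a) = Σ_{j=0}^∞ a_j q^{-(j+1)}`. -/
noncomputable def piQ (q : ℝ) (a : ℕ → ℝ) : ℝ := ∑' j : ℕ, a j / q ^ (j + 1)

/-- `a` is a sequence of digits in `{0,1}`. -/
def IsDigitSeq (a : ℕ → ℝ) : Prop := ∀ j, a j = 0 ∨ a j = 1

/-- `a` is a sequence of digits in `{-1,0,1}`. -/
def IsExtDigitSeq (a : ℕ → ℝ) : Prop := ∀ j, a j = -1 ∨ a j = 0 ∨ a j = 1

/-- The set of base-`q` expansions of `x`. -/
def SigmaSet (q x : ℝ) : Set (ℕ → ℝ) := {a | IsDigitSeq a ∧ piQ q a = x}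

/-- The interval `I_q = [0, 1/(q-1)]`. -/
def Iq (q : ℝ) : Set ℝ := Set.Icc 0 (1 / (q - 1))

/-- The switch region `J_q = [1/q, 1/(q(q-1))]`. -/
def Jq (q : ℝ) : Set ℝ := Set.Icc (1 / q) (1 / (q * (q - 1)))

/-- The set of points of `I_q` having exactly `m` base-`q` expansions. -/
def UqM (q : ℝ) (m : ℕ∞) : Set ℝ := {x | x ∈ Iq q ∧ (SigmaSet q x).encard = m}

/-- The set of points of `I_q` having a unique base-`q` expansion. -/
def Uq (q : ℝ) : Set ℝ := UqM q 1

/-- `B_m`: the set of bases `q ∈ (1,2)` for which some point has exactly `m` expansions. -/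
def Bset (m : ℕ∞) : Set ℝ := {q | q ∈ Set.Ioo (1 : ℝ) 2 ∧ (UqM q m).Nonempty}

/-- `x` is the `k`-Bonacci number: the root in `(1,2)` of `x^k = x^{k-1} + ⋯ + x + 1`. -/
def IsBonacci (k : ℕ) (x : ℝ) : Prop :=
  x ∈ Set.Ioo (1 : ℝ) 2 ∧ x ^ k = ∑ i ∈ Finset.range k, x ^ i

/-- `a` contains no occurrence of the word `01^k` as a consecutive block. -/
def AvoidsWord01 (k : ℕ) (a : ℕ → ℝ) : Prop :=
  ∀ i, ¬(a i = 0 ∧ ∀ j, 1 ≤ j → j ≤ k → a (i + j) = 1)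

/-- `a` contains no occurrence of the word `10^k` as a consecutive block. -/
def AvoidsWord10 (k : ℕ) (a : ℕ → ℝ) : Prop :=
  ∀ i, ¬(a i = 1 ∧ ∀ j, 1 ≤ j → j ≤ k → a (i + j) = 0)

/-- `S_k`: the set of `{0,1}`-sequences avoiding the words `01^k` and `10^k`. -/
def Sset (k : ℕ) : Set (ℕ → ℝ) := {a | IsDigitSeq a ∧ AvoidsWord01 k a ∧ AvoidsWord10 k a}

/-- `g_{q,k} = f_1^{-(k-1)} ∘ f_0^{-1}`, where `f_0^{-1}(y) = y/q` and `f_1^{-1}(y) = (y+1)/q`. -/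
noncomputable def gMap (q : ℝ) (k : ℕ) (x : ℝ) : ℝ := (fun y => (y + 1) / q)^[k - 1] (x / q)

/-- The maps `f_0(x) = qx` (for `b = false`) and `f_1(x) = qx - 1` (for `b = true`). -/
noncomputable def fDigit (q : ℝ) (b : Bool) (x : ℝ) : ℝ := if b then q * x - 1 else q * x

/-- `(a, b)` is a bounded gap of `C`: a bounded connected component of `ℝ \ C`. -/
def IsGap (C : Set ℝ) (a b : ℝ) : Prop :=
  a < b ∧ a ∈ C ∧ b ∈ C ∧ Set.Ioo a b ∩ C = ∅

/-- The left endpoint of the bridge of `C` lying immediately to the left of the gap `(a, b)`: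
the right endpoint of the nearest gap to the left having diameter at least `b - a`
(or `min C` if there is no such gap). -/
noncomputable def leftBridgeStart (C : Set ℝ) (a b : ℝ) : ℝ :=
  sSup ({sInf C} ∪ {d | ∃ c, IsGap C c d ∧ d ≤ a ∧ b - a ≤ d - c})

/-- The right endpoint of the bridge of `C` lying immediately to the right of the gap `(a, b)`. -/
noncomputable def rightBridgeEnd (C : Set ℝ) (a b : ℝ) : ℝ :=
  sInf ({sSup C} ∪ {c | ∃ d, IsGap C c d ∧ b ≤ c ∧ b - a ≤ d - c})

/-- The (Newhouse) thickness of a compact set `C ⊆ ℝ`: the infimum over all bounded gaps `G`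
of the ratio of the length of the bridge on either side of `G` to the length of `G`
(`∞` if `C` has no bounded gap). -/
noncomputable def thickness (C : Set ℝ) : ENNReal :=
  ⨅ p : {p : ℝ × ℝ // IsGap C p.1 p.2},
    ENNReal.ofReal
      (min ((p.1.1 - leftBridgeStart C p.1.1 p.1.2) / (p.1.2 - p.1.1))
        ((rightBridgeEnd C p.1.1 p.1.2 - p.1.2) / (p.1.2 - p.1.1)))

/-- `B` is contained in a gap of `A`, i.e. in a connected component of `ℝ \ A`. -/
def ContainedInGap (B A : Set ℝ) : Prop :=
  ∃ x ∈ Aᶜ, B ⊆ connectedComponentIn Aᶜ x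

/-- Two sets are interleaved if neither is contained in a gap of the other. -/
def Interleaved (A B : Set ℝ) : Prop :=
  ¬ContainedInGap B A ∧ ¬ContainedInGap A B

/-- `A` and `B` are `ε`-strongly interleaved: any compact sets within Hausdorff distance `ε`
of `A` and `B` respectively are interleaved. -/
def StronglyInterleaved (ε : ℝ) (A B : Set ℝ) : Prop :=
  ∀ A' B' : Set ℝ, IsCompact A' → IsCompact B' →
    EMetric.hausdorffEdist A A' ≤ ENNReal.ofReal ε →
    EMetric.hausdorffEdist B B' ≤ ENNReal.ofReal ε → Interleaved A' B'

/-- The sequence `0^{k-3}(01^{k-1})^∞` (0-indexed). -/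
noncomputable def seqG (k : ℕ) : ℕ → ℝ := fun j =>
  if j < k - 3 then 0 else if (j - (k - 3)) % k = 0 then 0 else 1

/-- The sequence `1^{k-3}(10^{k-1})^∞` (0-indexed). -/
noncomputable def seqH (k : ℕ) : ℕ → ℝ := fun j =>
  if j < k - 3 then 1 else if (j - (k - 3)) % k = 0 then 1 else 0

/-- The sequence `(1^{k-1}0)^∞` (0-indexed). -/
noncomputable def seqP (k : ℕ) : ℕ → ℝ := fun j => if j % k = k - 1 then 0 else 1




private lemma nat_le_pow_3half : ∀ n : ℕ, (n : ℝ) ≤ (3/2) ^ n := by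
  intro n
  induction n with
  | zero => norm_num
  | succ n ih =>
    rcases Nat.lt_or_ge n 2 with h | h
    · interval_cases n <;> norm_num
    · have h1 : (2 : ℝ) ≤ (n : ℝ) := by exact_mod_cast h
      have hp : (0:ℝ) ≤ (3/2:ℝ)^n := by positivity
      have h2 : ((n:ℝ)+1) ≤ (3/2)*(n:ℝ) := by linarith
      calc ((n+1 : ℕ):ℝ) = (n:ℝ) + 1 := by push_cast; ring
        _ ≤ (3/2)*(n:ℝ) := h2
        _ ≤ (3/2)*(3/2)^n := by nlinarith
        _ = (3/2)^(n+1) := by rw [pow_succ]; ring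

private lemma nat200_le_pow : ∀ n : ℕ, 15 ≤ n → 200 * (n : ℝ) ≤ (19/10) ^ n := by
  intro n hn
  induction n with
  | zero => omega
  | succ n ih =>
    rcases Nat.lt_or_ge n 15 with h | h
    · have hn14 : n = 14 := by omega
      subst hn14; norm_num
    · have h1 := ih h
      have h2 : (15:ℝ) ≤ (n:ℝ) := by exact_mod_cast h
      have : ((n+1:ℕ):ℝ) = (n:ℝ)+1 := by push_cast; ring
      rw [this, pow_succ]
      nlinarith

private lemma pow_one_add_le {x : ℝ} (n : ℕ) (hx : 0 ≤ x) (h : (n:ℝ)*x ≤ 1/200) :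
    (1+x)^n ≤ 200/199 := by
  rcases Nat.eq_zero_or_pos n with h0 | h0
  · subst h0; norm_num
  · have hn1 : (1:ℝ) ≤ (n:ℝ) := by exact_mod_cast h0
    have hx1 : x ≤ 1/200 := by nlinarith
    have hb : 1 + (n:ℝ) * (-x) ≤ (1 + (-x))^n := one_add_mul_le_pow (by linarith) n
    have hprod : (1+x)^n * (1-x)^n ≤ 1 := by
      rw [← mul_pow]
      apply pow_le_one₀ (by nlinarith) (by nlinarith)
    have hpos : (0:ℝ) < 1 - (n:ℝ)*x := by linarith
    have h2 : (1+x)^n * (1 - (n:ℝ)*x) ≤ 1 := by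
      have hnn : (0:ℝ) ≤ (1+x)^n := by positivity
      have hb' : 1 - (n:ℝ)*x ≤ (1-x)^n := by
        have : (1:ℝ) + (-x) = 1 - x := by ring
        rw [this] at hb; linarith
      calc (1+x)^n * (1-(n:ℝ)*x) ≤ (1+x)^n * (1-x)^n :=
            mul_le_mul_of_nonneg_left hb' hnn
        _ ≤ 1 := hprod
    have hnn : (0:ℝ) ≤ (1+x)^n := by positivity
    nlinarith

private lemma pow_close {a b : ℝ} (ha : 1 ≤ a) (hab : a ≤ b) (n : ℕ)
    (h : (n:ℝ)*(b-a) ≤ 1/200) : b^n ≤ (200/199) * a^n := by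
  have h1 : b ≤ a * (1 + (b - a)) := by nlinarith
  have h2 : (0:ℝ) ≤ b := by linarith
  calc b^n ≤ (a*(1+(b-a)))^n := pow_le_pow_left₀ h2 h1 n
    _ = a^n * (1+(b-a))^n := mul_pow a _ n
    _ ≤ a^n * (200/199) := by
        have := pow_one_add_le n (by linarith : (0:ℝ) ≤ b - a) h
        exact mul_le_mul_of_nonneg_left this (by positivity)
    _ = (200/199) * a^n := by ring

private lemma abs_pow_sub_pow_le' {a b : ℝ} (ha0 : 0 ≤ a) (ha : a ≤ 2) (hb0 : 0 ≤ b) (hb : b ≤ 2) :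
    ∀ n : ℕ, |a ^ n - b ^ n| ≤ (n : ℝ) * 2 ^ n * |a - b| := by
  intro n
  induction n with
  | zero => simp
  | succ n ih =>
    have key : a^(n+1) - b^(n+1) = a * (a^n - b^n) + b^n * (a - b) := by ring
    have h1 : |a^(n+1) - b^(n+1)| ≤ |a| * |a^n - b^n| + |b^n| * |a-b| := by
      rw [key]
      refine (abs_add_le _ _).trans ?_
      rw [abs_mul, abs_mul]
    have h2 : |a| ≤ 2 := abs_le.2 ⟨by linarith, ha⟩
    have h3 : |b^n| ≤ 2^n := by
      rw [abs_of_nonneg (pow_nonneg hb0 n)]; exact pow_le_pow_left₀ hb0 hb n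
    have h4 : (0:ℝ) ≤ |a^n - b^n| := abs_nonneg _
    have h5 : (0:ℝ) ≤ |a - b| := abs_nonneg _
    have h6 : (0:ℝ) < (2:ℝ)^n := by positivity
    have h7 : |a| * |a^n - b^n| ≤ 2 * ((n:ℝ) * 2^n * |a-b|) :=
      mul_le_mul h2 ih h4 (by norm_num)
    have h8 : |b^n| * |a-b| ≤ 2^n * |a-b| := mul_le_mul_of_nonneg_right h3 h5
    have h9 : ((n+1:ℕ):ℝ) = (n:ℝ)+1 := by push_cast; ring
    calc |a^(n+1) - b^(n+1)| ≤ |a| * |a^n - b^n| + |b^n| * |a-b| := h1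
      _ ≤ 2 * ((n:ℝ) * 2^n * |a-b|) + 2^n * |a-b| := by linarith
      _ ≤ ((n+1:ℕ):ℝ) * 2^(n+1) * |a-b| := by
          rw [h9, pow_succ]
          nlinarith [mul_nonneg (Nat.cast_nonneg n : (0:ℝ) ≤ n) h6.le, mul_nonneg (mul_nonneg (Nat.cast_nonneg n : (0:ℝ) ≤ n) h6.le) h5]

private lemma geom_sum_le_inv (x : ℝ) (h0 : 0 ≤ x) (h1 : x < 1) (n : ℕ) :
    ∑ j ∈ Finset.range n, x ^ j ≤ (1 - x)⁻¹ := by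
  have hs := summable_geometric_of_lt_one h0 h1
  have := Summable.sum_le_tsum (Finset.range n) (fun i _ => pow_nonneg h0 i) hs
  rwa [tsum_geometric_of_lt_one h0 h1] at this

private lemma inv_le_scale {a b : ℝ} (ha : 0 < a) (hb : 0 < b) (h : a ≤ (200/199)*b) :
    b⁻¹ ≤ (200/199) * a⁻¹ := by
  rw [← one_div, ← one_div, mul_one_div, div_le_div_iff₀ hb ha, one_mul]
  linarith

private lemma bonacci_sum {x : ℝ} (hx : 0 < x) {k : ℕ} (hk : 1 ≤ k)
    (hb : x^k = ∑ i ∈ Finset.range k, x^i) :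
    ∑ j ∈ Finset.range k, 1/x^(j+1) = 1 := by
  have h1 : ∀ j ∈ Finset.range k, 1/x^(j+1) = x^(k-1-j) / x^k := by
    intro j hj
    rw [Finset.mem_range] at hj
    rw [div_eq_div_iff (by positivity) (by positivity), one_mul, ← pow_add]
    congr 1
    omega
  rw [Finset.sum_congr rfl h1, ← Finset.sum_div, Finset.sum_range_reflect (fun j => x^j) k,
    ← hb, div_self (by positivity)]

private lemma sum_range_split_last (f : ℕ → ℝ) {k : ℕ} (hk : 1 ≤ k) :
    ∑ j ∈ Finset.range k, f j = ∑ j ∈ Finset.range (k-1), f j + f (k-1) := by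
  obtain ⟨n, rfl⟩ : ∃ n, k = n + 1 := ⟨k-1, by omega⟩
  simp [Finset.sum_range_succ]

private lemma summable_digit {q : ℝ} (hq : 1 < q) {a : ℕ → ℝ} (h0 : ∀ j, 0 ≤ a j)
    (h1 : ∀ j, a j ≤ 1) : Summable (fun j => a j / q^(j+1)) := by
  have hq0 : 0 < q := by linarith
  apply Summable.of_nonneg_of_le (fun j => div_nonneg (h0 j) (by positivity)) (fun j => ?_)
    (summable_geometric_of_lt_one (r := 1/q) (by positivity) (by rw [div_lt_one hq0]; exact hq))
  have hpow : (1:ℝ) ≤ q^j := one_le_pow₀ hq.le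
  have h2 : q^j ≤ q^(j+1) := pow_le_pow_right₀ hq.le (by omega)
  have : a j / q^(j+1) ≤ 1 / q^j := by
    apply div_le_div₀ (by norm_num) (h1 j) (by positivity) (by linarith)
  calc a j / q^(j+1) ≤ 1/q^j := this
    _ = (1/q)^j := by rw [div_pow, one_pow]

private lemma piQ_nonneg {q : ℝ} (hq : 1 < q) {a : ℕ → ℝ} (h0 : ∀ j, 0 ≤ a j) :
    0 ≤ piQ q a := by
  have hq0 : 0 < q := by linarith
  exact tsum_nonneg (fun j => div_nonneg (h0 j) (by positivity))

private lemma piQ_shift {q : ℝ} (hq : 1 < q) {a : ℕ → ℝ} (h0 : ∀ j, 0 ≤ a j)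
    (h1 : ∀ j, a j ≤ 1) (n : ℕ) :
    piQ q a = (∑ j ∈ Finset.range n, a j / q ^ (j+1)) + piQ q (fun j => a (j + n)) / q ^ n := by
  have hq0 : 0 < q := by linarith
  have hs := summable_digit hq h0 h1
  have key := (Summable.sum_add_tsum_nat_add n hs).symm
  rw [piQ, key]
  congr 1
  have h2 : ∀ i : ℕ, a (i + n) / q ^ (i + n + 1) = (a (i + n) / q ^ (i + 1)) / q ^ n := by
    intro i
    rw [div_div, ← pow_add]
    congr 2
    omega
  rw [tsum_congr h2, tsum_div_const]
  rfl

private lemma piQ_periodic {q : ℝ} (hq : 1 < q) {a : ℕ → ℝ} (h0 : ∀ j, 0 ≤ a j)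
    (h1 : ∀ j, a j ≤ 1) {k : ℕ} (hk : 1 ≤ k) (hper : ∀ j, a (j + k) = a j) :
    piQ q a = (∑ j ∈ Finset.range k, a j / q ^ (j+1)) / (1 - 1/q^k) := by
  have hq0 : 0 < q := by linarith
  have hqk1 : (1:ℝ) < q^k := one_lt_pow₀ hq (by omega)
  have hrk : 1/q^k < 1 := by rw [div_lt_one (by positivity)]; exact hqk1
  have hrk0 : 0 < 1/q^k := by positivity
  have hsh := piQ_shift hq h0 h1 k
  have heq : (fun j => a (j + k)) = a := funext hper
  rw [heq] at hsh
  have hne : 1 - 1/q^k ≠ 0 := by linarith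
  rw [eq_div_iff hne, mul_sub, mul_one, mul_one_div]
  linarith [hsh]

private lemma tsum_inv_pow_succ {q : ℝ} (hq : 1 < q) : ∑' j : ℕ, 1/q^(j+1) = 1/(q-1) := by
  have hq0 : 0 < q := by linarith
  have h1 : ∀ j:ℕ, (1:ℝ)/q^(j+1) = (1/q) * (1/q)^j := by
    intro j
    rw [← pow_succ', div_pow, one_pow]
  rw [tsum_congr h1, tsum_mul_left,
    tsum_geometric_of_lt_one (by positivity) (by rw [div_lt_one hq0]; exact hq)]
  have h2 : 1 - 1/q = (q-1)/q := by field_simp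
  have hne : q - 1 ≠ 0 := by linarith
  rw [h2, inv_div]
  field_simp

private lemma sum_range_split_last' (f : ℕ → ℝ) {k : ℕ} (hk : 1 ≤ k) :
    ∑ j ∈ Finset.range k, f j = ∑ j ∈ Finset.range (k-1), f j + f (k-1) := by
  obtain ⟨n, rfl⟩ : ∃ n, k = n + 1 := ⟨k-1, by omega⟩
  simp [Finset.sum_range_succ]

private lemma seqP_digit0 (k : ℕ) : ∀ j, 0 ≤ seqP k j := by
  intro j; unfold seqP; split_ifs <;> norm_num
private lemma seqP_digit1 (k : ℕ) : ∀ j, seqP k j ≤ 1 := by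
  intro j; unfold seqP; split_ifs <;> norm_num
private lemma seqG_digit0 (k : ℕ) : ∀ j, 0 ≤ seqG k j := by
  intro j; unfold seqG; split_ifs <;> norm_num
private lemma seqG_digit1 (k : ℕ) : ∀ j, seqG k j ≤ 1 := by
  intro j; unfold seqG; split_ifs <;> norm_num
private lemma seqH_digit0 (k : ℕ) : ∀ j, 0 ≤ seqH k j := by
  intro j; unfold seqH; split_ifs <;> norm_num
private lemma seqH_digit1 (k : ℕ) : ∀ j, seqH k j ≤ 1 := by
  intro j; unfold seqH; split_ifs <;> norm_num

private lemma piQ_seqP_eq {q : ℝ} (hq : 1 < q) {k : ℕ} (hk : 4 ≤ k) :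
    piQ q (seqP k) = (∑ j ∈ Finset.range (k-1), 1/q^(j+1)) / (1 - 1/q^k) := by
  have hq0 : 0 < q := by linarith
  have hper : ∀ j, seqP k (j + k) = seqP k j := by
    intro j; unfold seqP; rw [Nat.add_mod_right]
  rw [piQ_periodic hq (seqP_digit0 k) (seqP_digit1 k) (by omega) hper]
  congr 1
  rw [sum_range_split_last' (fun j => seqP k j / q^(j+1)) (by omega : 1 ≤ k)]
  have hlast : seqP k (k-1) = 0 := by
    unfold seqP; rw [if_pos (Nat.mod_eq_of_lt (by omega))]
  rw [hlast]
  simp only [zero_div, add_zero]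
  apply Finset.sum_congr rfl
  intro j hj
  rw [Finset.mem_range] at hj
  have : seqP k j = 1 := by
    unfold seqP; rw [if_neg]; rw [Nat.mod_eq_of_lt (by omega)]; omega
  rw [this]

private lemma piQ_seqG_eq {q : ℝ} (hq : 1 < q) {k : ℕ} (hk : 4 ≤ k) :
    piQ q (seqG k) = piQ q (seqP k) / q^(k-2) := by
  have hq0 : 0 < q := by linarith
  obtain ⟨n, rfl⟩ : ∃ n, k = n + 4 := ⟨k-4, by omega⟩
  have e3 : n + 4 - 3 = n + 1 := by omega
  have e2 : n + 4 - 2 = n + 2 := by omega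
  have e1 : n + 4 - 1 = n + 3 := by omega
  -- the periodic tail
  set b : ℕ → ℝ := fun j => if j % (n+4) = 0 then 0 else 1 with hb
  have hb0 : ∀ j, 0 ≤ b j := by intro j; rw [hb]; dsimp only; split_ifs <;> norm_num
  have hb1 : ∀ j, b j ≤ 1 := by intro j; rw [hb]; dsimp only; split_ifs <;> norm_num
  have htail : (fun j => seqG (n+4) (j + (n+1))) = b := by
    funext j
    unfold seqG
    rw [e3, if_neg (by omega), Nat.add_sub_cancel]
  -- step 1 : shift by n+1
  have hstep1 : piQ q (seqG (n+4)) = piQ q b / q^(n+1) := by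
    rw [piQ_shift hq (seqG_digit0 (n+4)) (seqG_digit1 (n+4)) (n+1), htail]
    have hzero : ∀ j ∈ Finset.range (n+1), seqG (n+4) j / q^(j+1) = 0 := by
      intro j hj
      rw [Finset.mem_range] at hj
      unfold seqG
      rw [e3, if_pos (by omega), zero_div]
    rw [Finset.sum_congr rfl hzero]
    simp
  -- step 2 : periodic formula for b
  have hper : ∀ j, b (j + (n+4)) = b j := by
    intro j; rw [hb]; simp only [Nat.add_mod_right]
  have hstep2 : piQ q b = (∑ j ∈ Finset.range (n+4), b j / q^(j+1)) / (1 - 1/q^(n+4)) :=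
    piQ_periodic hq hb0 hb1 (by omega) hper
  -- step 3 : prefix sum of b
  have hstep3 : ∑ j ∈ Finset.range (n+4), b j / q^(j+1)
      = (∑ j ∈ Finset.range (n+3), 1/q^(j+1)) / q := by
    rw [Finset.sum_range_succ' (fun j => b j / q^(j+1)) (n+3)]
    have hb00 : b 0 = 0 := by rw [hb]; simp
    rw [hb00]
    simp only [zero_div, add_zero]
    rw [Finset.sum_div]
    apply Finset.sum_congr rfl
    intro j hj
    rw [Finset.mem_range] at hj
    have hbj : b (j+1) = 1 := by
      rw [hb]; dsimp only
      rw [if_neg]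
      rw [Nat.mod_eq_of_lt (by omega)]
      omega
    rw [hbj, div_div, ← pow_succ]
  -- combine
  rw [piQ_seqP_eq hq hk, hstep1, hstep2, hstep3, e1, e2]
  have hne1 : q^(n+4) ≠ 0 := by positivity
  have hqk1 : (1:ℝ) < q^(n+4) := one_lt_pow₀ hq (by omega)
  have hne2 : 1 - 1/q^(n+4) ≠ 0 := by
    have : 1/q^(n+4) < 1 := by rw [div_lt_one (by positivity)]; exact hqk1
    have : 0 < 1 - 1/q^(n+4) := by linarith
    linarith
  field_simp
  ring

private lemma piQ_seqH_eq {q : ℝ} (hq : 1 < q) {k : ℕ} (hk : 4 ≤ k) :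
    piQ q (seqH k) = 1/(q-1) - piQ q (seqG k) := by
  have hq0 : 0 < q := by linarith
  have hadd : piQ q (seqG k) + piQ q (seqH k) = 1/(q-1) := by
    rw [piQ, piQ, ← Summable.tsum_add (summable_digit hq (seqG_digit0 k) (seqG_digit1 k))
      (summable_digit hq (seqH_digit0 k) (seqH_digit1 k))]
    have h1 : ∀ j : ℕ, seqG k j / q^(j+1) + seqH k j / q^(j+1) = 1/q^(j+1) := by
      intro j
      rw [← add_div]
      congr 1
      unfold seqG seqH
      split_ifs <;> norm_num
    rw [tsum_congr h1, tsum_inv_pow_succ hq]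
  linarith

private lemma gMap_eq {q : ℝ} (hq : 0 < q) {k : ℕ} (hk : 1 ≤ k) (x : ℝ) :
    gMap q k x = x / q^k + ∑ j ∈ Finset.range (k-1), 1/q^(j+1) := by
  have hqne : q ≠ 0 := ne_of_gt hq
  have key : ∀ n (y : ℝ), (fun y => (y+1)/q)^[n] y = y/q^n + ∑ j ∈ Finset.range n, 1/q^(j+1) := by
    intro n
    induction n with
    | zero => intro y; simp
    | succ n ih =>
      intro y
      rw [Function.iterate_succ_apply', ih y, Finset.sum_range_succ' (fun j => 1/q^(j+1)) n]
      have hs : ∀ j ∈ Finset.range n, (1:ℝ)/q^(j+1+1) = (1/q^(j+1))/q := by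
        intro j _; rw [div_div, ← pow_succ]
      rw [Finset.sum_congr rfl hs, ← Finset.sum_div]
      have hpn : q^n ≠ 0 := by positivity
      have hpn1 : q^(n+1) ≠ 0 := by positivity
      rw [pow_succ]
      field_simp
      ring
  unfold gMap
  rw [key (k-1) (x/q)]
  have : x/q/q^(k-1) = x/q^k := by
    rw [div_div, ← pow_succ']
    congr 2
    omega
  rw [this]

private lemma gMap_iterate {q : ℝ} (hq : 1 < q) {k : ℕ} (hk : 4 ≤ k) (i : ℕ) (x : ℝ) :
    (gMap q k)^[i] x = (x - piQ q (seqP k)) / q^(i*k) + piQ q (seqP k) := by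
  have hq0 : 0 < q := by linarith
  have hqk1 : (1:ℝ) < q^k := one_lt_pow₀ hq (by omega)
  have hne2 : 1 - 1/q^k ≠ 0 := by
    have h1 : 1/q^k < 1 := by rw [div_lt_one (by positivity)]; exact hqk1
    have : 0 < 1 - 1/q^k := by linarith
    linarith
  set P := piQ q (seqP k) with hP
  have hC : P * (1 - 1/q^k) = ∑ j ∈ Finset.range (k-1), 1/q^(j+1) := by
    rw [hP, piQ_seqP_eq hq hk, div_mul_cancel₀ _ hne2]
  induction i with
  | zero => simp
  | succ i ih =>
    rw [Function.iterate_succ_apply', ih, gMap_eq hq0 (by omega), ← hC]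
    have h1 : q^((i+1)*k) = q^(i*k) * q^k := by rw [← pow_add]; congr 1; ring
    have h2 : q^(i*k) ≠ 0 := by positivity
    have h3 : q^k ≠ 0 := by positivity
    rw [h1]
    field_simp
    ring

private lemma bon_gt92 {x : ℝ} (h1 : 1 < x) (hle1 : x^4*(2-x) ≤ 1) : 48/25 < x := by
  by_contra hcon
  push_neg at hcon
  have hx0 : (0:ℝ) < x := by linarith
  have c1 : (0:ℝ) ≤ x^3*(48/25 - x) := mul_nonneg (by positivity) (by linarith)
  have c2 : (0:ℝ) ≤ x^2*(48/25 - x) := mul_nonneg (by positivity) (by linarith)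
  have c3 : (0:ℝ) ≤ x*(48/25 - x) := mul_nonneg (by positivity) (by linarith)
  have c4 : (0:ℝ) ≤ 48/25 - x := by linarith
  have hQpos : (37009:ℝ)/390625 ≤ 1+x+x^2+x^3-x^4 := by nlinarith [c1, c2, c3, c4]
  have h5 : 0 < (x-1)*(1+x+x^2+x^3-x^4) := mul_pos (by linarith) (by linarith)
  nlinarith [h5, hle1]

private lemma comp_pow {q qk δ : ℝ} {N : ℕ} (hq1 : 1 ≤ q) (hQ1 : 1 ≤ qk)
    (hδd : |q - qk| ≤ δ) (hNδ : (N:ℝ)*δ ≤ 1/200) :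
    ∀ n ≤ N, q^n ≤ (200/199)*qk^n ∧ qk^n ≤ (200/199)*q^n := by
  intro n hn
  have hδ0 : 0 ≤ δ := le_trans (abs_nonneg _) hδd
  have hq0 : (0:ℝ) < q := by linarith
  have hQ0 : (0:ℝ) < qk := by linarith
  have hnN : (n:ℝ) ≤ (N:ℝ) := by exact_mod_cast hn
  have hnδ : (n:ℝ)*δ ≤ 1/200 := by nlinarith [mul_le_mul_of_nonneg_right hnN hδ0]
  rcases le_total q qk with hle | hle
  · have hqn : q^n ≤ qk^n := pow_le_pow_left₀ hq0.le hle n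
    have hQn : qk^n ≤ (200/199)*q^n := by
      apply pow_close hq1 hle n
      have hqd : qk - q ≤ δ := by
        rw [abs_sub_comm] at hδd
        linarith [le_abs_self (qk - q)]
      nlinarith [mul_le_mul_of_nonneg_left hqd (Nat.cast_nonneg (α := ℝ) n)]
    exact ⟨by nlinarith [pow_pos hQ0 n], hQn⟩
  · have hqn : qk^n ≤ q^n := pow_le_pow_left₀ hQ0.le hle n
    have hQn : q^n ≤ (200/199)*qk^n := by
      apply pow_close hQ1 hle n
      have hqd : q - qk ≤ δ := by linarith [le_abs_self (q - qk)]
      nlinarith [mul_le_mul_of_nonneg_left hqd (Nat.cast_nonneg (α := ℝ) n)]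
    exact ⟨hQn, by nlinarith [pow_pos hq0 n]⟩

private lemma interval_leaves {P s G κ E : ℝ} (hs0 : 0 < s) (hs1 : s ≤ 1) (hκ0 : 0 < κ)
    (hu1 : -((7/100)*(κ*s)) ≤ 1-P) (hu2 : 1-P ≤ (7/100)*(κ*s))
    (hG1 : (357/100)*κ ≤ G) (hG2 : G ≤ (404/100)*κ)
    (hE1 : (98/100)*κ ≤ E) (hE2 : E ≤ (113/100)*κ) :
    max 1 (max ((1-P)*s + P) ((E + (1-P) - G)*s + P)) + s*G/8
      < min (1 + s*G) (min (((1-P)*s + P) + s*G) ((E + (1-P))*s + P)) := by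
  have hκs : 0 < κ*s := mul_pos hκ0 hs0
  have hGs1 : (357/100)*(κ*s) ≤ G*s := by
    have := mul_le_mul_of_nonneg_right hG1 hs0.le
    linarith only [this]
  have hGs2 : G*s ≤ (404/100)*(κ*s) := by
    have := mul_le_mul_of_nonneg_right hG2 hs0.le
    linarith only [this]
  have hEs1 : (98/100)*(κ*s) ≤ E*s := by
    have := mul_le_mul_of_nonneg_right hE1 hs0.le
    linarith only [this]
  have hEs2 : E*s ≤ (113/100)*(κ*s) := by
    have := mul_le_mul_of_nonneg_right hE2 hs0.le
    linarith only [this]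
  have hκss : κ*s*s ≤ κ*s := by
    have h1 : κ*s*s ≤ κ*s*1 := mul_le_mul_of_nonneg_left hs1 hκs.le
    linarith only [h1]
  have hκss0 : 0 ≤ κ*s*s := by positivity
  have hus1 : -((7/100)*(κ*s)) ≤ (1-P)*s := by
    have h1 := mul_le_mul_of_nonneg_right hu1 hs0.le
    linarith only [h1, hκss, hκss0]
  have hus2 : (1-P)*s ≤ (7/100)*(κ*s) := by
    have h1 := mul_le_mul_of_nonneg_right hu2 hs0.le
    linarith only [h1, hκss, hκss0]
  have l11 : (1:ℝ) + s*G/8 < 1 + s*G := by linarith only [hGs1, hκs]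
  have l12 : (1:ℝ) + s*G/8 < ((1-P)*s + P) + s*G := by
    linarith only [hu2, hus1, hGs1, hκs]
  have l13 : (1:ℝ) + s*G/8 < (E + (1-P))*s + P := by
    linarith only [hu2, hus1, hGs2, hEs1, hκs]
  have l21 : ((1-P)*s + P) + s*G/8 < 1 + s*G := by
    linarith only [hus2, hu1, hGs1, hκs]
  have l22 : ((1-P)*s + P) + s*G/8 < ((1-P)*s + P) + s*G := by
    linarith only [hGs1, hκs]
  have l23 : ((1-P)*s + P) + s*G/8 < (E + (1-P))*s + P := by
    linarith only [hGs2, hEs1, hκs]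
  have l31 : ((E + (1-P) - G)*s + P) + s*G/8 < 1 + s*G := by
    linarith only [hEs2, hus2, hu1, hGs1, hκs]
  have l32 : ((E + (1-P) - G)*s + P) + s*G/8 < ((1-P)*s + P) + s*G := by
    linarith only [hEs2, hGs1, hκs]
  have l33 : ((E + (1-P) - G)*s + P) + s*G/8 < (E + (1-P))*s + P := by
    linarith only [hGs1, hκs]
  have h1 := lt_min l11 (lt_min l12 l13)
  have h2 := lt_min l21 (lt_min l22 l23)
  have h3 := lt_min l31 (lt_min l32 l33)
  rcases max_choice (1:ℝ) (max ((1-P)*s + P) ((E + (1-P) - G)*s + P)) with he | he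
  · rw [he]; exact h1
  · rw [he]
    rcases max_choice ((1-P)*s + P) ((E + (1-P) - G)*s + P) with he2 | he2 <;> rw [he2]
    · exact h2
    · exact h3

set_option maxHeartbeats 1000000 in
theorem bounding_beta_below
    (m k : ℕ) (hm : 1 ≤ m) (hk : 4 ≤ k) (qk : ℝ) (hqk : IsBonacci k qk)
    (q : ℝ) (hq : q ∈ Set.Ioo (1 : ℝ) 2)
    (hclose : |q - qk| < qk ^ (-(((m : ℤ) + 2) * (k : ℤ)) - 3))
    (L R : ℕ → ℝ) (LQ RQ : ℝ) (Bq : Set ℝ) (Dq βq : ℝ)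
    (hL : ∀ i, L i = (gMap q k)^[i] 1)
    (hR : ∀ i, R i =
      (gMap q k)^[i] (1 + q ^ (-(((m : ℤ) - (i : ℤ)) * (k : ℤ))) * piQ q (seqG k)))
    (hLQ : LQ = (gMap q k)^[m] (piQ q (seqH k)))
    (hRQ : RQ = (gMap q k)^[m] (1 / (q - 1)))
    (hB : Bq = (⋂ i ∈ Finset.Icc 0 m, Set.Icc (L i) (R i)) ∩ Set.Icc LQ RQ)
    (hD : Dq = q ^ (-(((m : ℤ) + 1) * (k : ℤ)) + 2) * piQ q (seqP k))
    (hβ : βq = min (1 / 4) ((MeasureTheory.volume Bq).toReal / Dq)) :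
    1 / 8 < βq := by
  obtain ⟨hq1, hq2⟩ := hq
  obtain ⟨⟨hQ1, hQ2⟩, hQk⟩ := hqk
  have hq0 : (0:ℝ) < q := by linarith only [hq1]
  have hQ0 : (0:ℝ) < qk := by linarith only [hQ1]
  have hq1' : (1:ℝ) < q := hq1
  -- Bonacci identity : qk^k * (2 - qk) = 1
  have hkey : qk^k * (2 - qk) = 1 := by
    have hgs := geom_sum_mul qk k
    rw [← hQk] at hgs
    linear_combination -hgs
  -- qk > 1.92
  have hQ92 : (48/25 : ℝ) < qk := by
    apply bon_gt92 hQ1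
    have h4 : qk^4 ≤ qk^k := pow_le_pow_right₀ hQ1.le hk
    have h2q : (0:ℝ) < 2 - qk := by linarith only [hQ2]
    nlinarith only [hkey, h4, h2q]
  set N := (m+2)*k + 3 with hN
  have hclose' : |q - qk| < (qk ^ N)⁻¹ := by
    have he : (-(((m:ℤ)+2)*(k:ℤ)) - 3) = -(N:ℤ) := by rw [hN]; push_cast; ring
    rwa [he, zpow_neg, zpow_natCast] at hclose
  set δ := |q - qk| with hδdef
  have hδ0 : 0 ≤ δ := abs_nonneg _
  have hd1 : q - qk ≤ δ := le_abs_self _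
  have hd2 : -δ ≤ q - qk := neg_abs_le _
  have hN15 : 15 ≤ N := by
    have h34 : 3*4 ≤ (m+2)*k := Nat.mul_le_mul (by omega) hk
    omega
  have hqk19 : (19/10:ℝ) ≤ qk := by linarith only [hQ92]
  have hpowN : (19/10:ℝ)^N ≤ qk^N := pow_le_pow_left₀ (by norm_num) hqk19 N
  have hp15 : ((19:ℝ)/10)^15 ≤ (19/10)^N := pow_le_pow_right₀ (by norm_num) hN15
  have h1000 : (1000:ℝ) ≤ (19/10)^15 := by norm_num
  have hqkN_pos : (0:ℝ) < qk^N := by positivity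
  have hδsmall : δ ≤ 1/1000 := by
    have h2 : (1000:ℝ) ≤ qk^N := by linarith only [h1000, hp15, hpowN]
    have h3 : (qk^N)⁻¹ ≤ 1/1000 := by
      rw [← one_div]
      exact div_le_div_of_nonneg_left (by norm_num) (by norm_num) h2
    linarith only [hclose'.le, h3]
  have hq19 : (19/10:ℝ) ≤ q := by linarith only [hQ92, hd2, hδsmall]
  have hNδ : (N:ℝ) * δ ≤ 1/200 := by
    have h200 := nat200_le_pow N hN15
    have hδN : δ * qk^N ≤ 1 := by
      have h1 : δ * qk^N ≤ (qk^N)⁻¹ * qk^N :=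
        mul_le_mul_of_nonneg_right hclose'.le hqkN_pos.le
      rw [inv_mul_cancel₀ (ne_of_gt hqkN_pos)] at h1
      exact h1
    have h5 := mul_le_mul_of_nonneg_right (le_trans h200 hpowN) hδ0
    nlinarith only [h5, hδN, hδ0]
  have hcomp : ∀ n : ℕ, n ≤ N → q^n ≤ (200/199) * qk^n ∧ qk^n ≤ (200/199) * q^n :=
    comp_pow (by linarith only [hq1]) (by linarith only [hQ1]) (le_of_eq hδdef.symm) hNδ
  -- scales
  set κ := (q^k)⁻¹ with hκdef
  set s := (q^(m*k))⁻¹ with hsdef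
  have hκ0 : 0 < κ := by rw [hκdef]; positivity
  have hs0 : 0 < s := by rw [hsdef]; positivity
  have hs1 : s ≤ 1 := by
    rw [hsdef]
    exact inv_le_one_of_one_le₀ (one_le_pow₀ (by linarith only [hq1]))
  have hqk13 : (13:ℝ) ≤ q^k := by
    have h1 : (13:ℝ) ≤ (19/10)^4 := by norm_num
    have h2 : ((19:ℝ)/10)^4 ≤ (19/10)^k := pow_le_pow_right₀ (by norm_num) hk
    have h3 : ((19:ℝ)/10)^k ≤ q^k := pow_le_pow_left₀ (by norm_num) hq19 k
    linarith only [h1, h2, h3]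
  have hκ13 : κ ≤ 1/13 := by
    rw [hκdef, ← one_div]
    exact div_le_div_of_nonneg_left (by norm_num) (by norm_num) hqk13
  have hone : (1:ℝ)/q^k = κ := by rw [hκdef, one_div]
  -- P and its perturbation bound
  set P := piQ q (seqP k) with hPdef
  set G := piQ q (seqG k) with hGdef
  set C := ∑ j ∈ Finset.range (k-1), 1/q^(j+1) with hCdef
  set Sq := ∑ j ∈ Finset.range k, 1/q^(j+1) with hSqdef
  have hκlt1 : κ < 1 := lt_of_le_of_lt hκ13 (by norm_num)
  have hPC : P * (1 - κ) = C := by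
    rw [hPdef, piQ_seqP_eq hq1' hk, ← hCdef, hone,
      div_mul_cancel₀ _ (ne_of_gt (by linarith only [hκlt1] : (0:ℝ) < 1 - κ))]
  have hSqC : Sq = C + κ := by
    rw [hSqdef, hCdef, sum_range_split_last (fun j => 1/q^(j+1)) (by omega : 1 ≤ k)]
    congr 1
    rw [show k-1+1 = k by omega, hone]
  have hSQ1 : ∑ j ∈ Finset.range k, 1/qk^(j+1) = 1 := bonacci_sum hQ0 (by omega) hQk
  have hdiff : |1 - Sq| ≤ 5 * δ := by
    have hterm : ∀ j ∈ Finset.range k, |1/qk^(j+1) - 1/q^(j+1)| ≤ δ*(300/361)^(j+1) := by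
      intro j _
      have hd : 1/qk^(j+1) - 1/q^(j+1) = (q^(j+1) - qk^(j+1))/(qk^(j+1)*q^(j+1)) := by
        field_simp
      rw [hd, abs_div, abs_of_pos (by positivity : (0:ℝ) < qk^(j+1)*q^(j+1))]
      have hnum := abs_pow_sub_pow_le' hq0.le hq2.le hQ0.le hQ2.le (j+1)
      have hden : ((361:ℝ)/100)^(j+1) ≤ qk^(j+1)*q^(j+1) := by
        rw [← mul_pow]
        apply pow_le_pow_left₀ (by norm_num)
        nlinarith only [hq19, hqk19]
      have h3 : ((j+1:ℕ):ℝ)*2^(j+1) ≤ 3^(j+1) := by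
        have h31 := nat_le_pow_3half (j+1)
        have h32 : ((3:ℝ)/2)^(j+1) * 2^(j+1) = 3^(j+1) := by
          rw [← mul_pow]; norm_num
        nlinarith only [h31, h32, pow_pos (by norm_num : (0:ℝ) < 2) (j+1)]
      calc |q^(j+1) - qk^(j+1)|/(qk^(j+1)*q^(j+1))
          ≤ (3^(j+1)*δ)/(((361:ℝ)/100)^(j+1)) := by
            apply div_le_div₀ (by positivity) ?_ (by positivity) hden
            calc |q^(j+1) - qk^(j+1)| ≤ ((j+1:ℕ):ℝ)*2^(j+1)*δ := hnum
              _ ≤ 3^(j+1)*δ := mul_le_mul_of_nonneg_right h3 hδ0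
        _ = δ * ((3:ℝ)^(j+1)/((361:ℝ)/100)^(j+1)) := by ring
        _ = δ * (300/361)^(j+1) := by rw [← div_pow]; norm_num
    have hsum2 : ∑ j ∈ Finset.range k, ((300:ℝ)/361)^(j+1) ≤ 5 := by
      have hx : ∀ j ∈ Finset.range k, ((300:ℝ)/361)^(j+1) = (300/361)*(300/361)^j := by
        intro j _; rw [pow_succ]; ring
      rw [Finset.sum_congr rfl hx, ← Finset.mul_sum]
      have hgs := geom_sum_le_inv (300/361) (by norm_num) (by norm_num) k
      have hgs0 : (0:ℝ) ≤ ∑ j ∈ Finset.range k, ((300:ℝ)/361)^j :=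
        Finset.sum_nonneg (fun j _ => by positivity)
      nlinarith only [hgs, hgs0]
    calc |1 - Sq| = |∑ j ∈ Finset.range k, (1/qk^(j+1) - 1/q^(j+1))| := by
          rw [Finset.sum_sub_distrib, hSQ1, ← hSqdef]
      _ ≤ ∑ j ∈ Finset.range k, |1/qk^(j+1) - 1/q^(j+1)| := Finset.abs_sum_le_sum_abs _ _
      _ ≤ ∑ j ∈ Finset.range k, δ*(300/361)^(j+1) := Finset.sum_le_sum hterm
      _ = δ * ∑ j ∈ Finset.range k, ((300:ℝ)/361)^(j+1) := by rw [Finset.mul_sum]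
      _ ≤ 5*δ := by
          have hsp : (0:ℝ) ≤ ∑ j ∈ Finset.range k, ((300:ℝ)/361)^(j+1) :=
            Finset.sum_nonneg (fun j _ => by positivity)
          nlinarith only [hsum2, hδ0, hsp]
  have huabs : |1 - P| ≤ 6 * δ := by
    have key_u : (1 - P) * (1 - κ) = 1 - Sq := by linear_combination hSqC - hPC
    have h1 : |1-P| * (1-κ) = |1 - Sq| := by
      rw [← key_u, abs_mul, abs_of_pos (by linarith only [hκlt1] : (0:ℝ) < 1 - κ)]
    have h2 := mul_le_mul_of_nonneg_left hκ13 (abs_nonneg (1-P))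
    linarith only [h1, h2, hdiff, hδ0, abs_nonneg (1-P)]
  have hu1 : -(6*δ) ≤ 1 - P := (abs_le.1 huabs).1
  have hu2 : 1 - P ≤ 6*δ := (abs_le.1 huabs).2
  have hP99 : 99/100 ≤ P := by linarith only [hu2, hδsmall]
  have hP101 : P ≤ 101/100 := by linarith only [hu1, hδsmall]
  -- |1-P| relative to κ*s
  have hmkN : m*k ≤ N := by
    have : m*k ≤ (m+2)*k := Nat.mul_le_mul_right k (by omega)
    omega
  have h2k3N : 2*k+3 ≤ N := by
    have : 2*k ≤ (m+2)*k := Nat.mul_le_mul_right k (by omega)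
    omega
  have hkN : k ≤ N := by
    have : 1*k ≤ (m+2)*k := Nat.mul_le_mul_right k (by omega)
    omega
  have hinv1 : (qk^(m*k))⁻¹ ≤ (200/199) * s := by
    rw [hsdef]
    exact inv_le_scale (by positivity) (by positivity) (hcomp (m*k) hmkN).1
  have hq89 : (89:ℝ) ≤ q^(k+3) := by
    have h1 : (89:ℝ) ≤ (19/10)^7 := by norm_num
    have h2 : ((19:ℝ)/10)^7 ≤ (19/10)^(k+3) := pow_le_pow_right₀ (by norm_num) (by omega)
    have h3 : ((19:ℝ)/10)^(k+3) ≤ q^(k+3) := pow_le_pow_left₀ (by norm_num) hq19 _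
    linarith only [h1, h2, h3]
  have hinv2 : (qk^(2*k+3))⁻¹ ≤ (200/199) * (κ * (1/89)) := by
    have ha : (q^(2*k+3))⁻¹ = κ * (q^(k+3))⁻¹ := by
      rw [hκdef, ← mul_inv, ← pow_add, show k + (k+3) = 2*k+3 by omega]
    have hb : (q^(k+3))⁻¹ ≤ 1/89 := by
      rw [← one_div]
      exact div_le_div_of_nonneg_left (by norm_num) (by norm_num) hq89
    calc (qk^(2*k+3))⁻¹ ≤ (200/199)*(q^(2*k+3))⁻¹ :=
          inv_le_scale (by positivity) (by positivity) (hcomp (2*k+3) h2k3N).1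
      _ = (200/199)*(κ * (q^(k+3))⁻¹) := by rw [ha]
      _ ≤ (200/199)*(κ*(1/89)) := by
          apply mul_le_mul_of_nonneg_left _ (by norm_num)
          exact mul_le_mul_of_nonneg_left hb hκ0.le
  have hδκs : δ ≤ ((200/199)*s) * ((200/199)*(κ*(1/89))) := by
    calc δ ≤ (qk^N)⁻¹ := hclose'.le
      _ = (qk^(m*k))⁻¹ * (qk^(2*k+3))⁻¹ := by
          rw [← mul_inv, ← pow_add, show m*k + (2*k+3) = N by rw [hN]; ring]
      _ ≤ _ := mul_le_mul hinv1 hinv2 (by positivity) (by positivity)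
  have husκ : |1 - P| ≤ (7/100) * (κ * s) := by
    have h1 : |1-P| ≤ 6*δ := huabs
    have h2 := mul_pos hκ0 hs0
    nlinarith only [h1, h2, hδκs]
  -- E := 1/(q-1) - 1 bounds
  have h2qk : 2 - qk = (qk^k)⁻¹ := eq_inv_of_mul_eq_one_left (by linear_combination hkey)
  have hqkk_up : (qk^k)⁻¹ ≤ (200/199)*κ := by
    rw [hκdef]
    exact inv_le_scale (by positivity) (by positivity) (hcomp k hkN).1
  have hqkk_lo : (199/200)*κ ≤ (qk^k)⁻¹ := by
    have h := inv_le_scale (by positivity : (0:ℝ) < qk^k) (by positivity : (0:ℝ) < q^k)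
      (hcomp k hkN).2
    rw [← hκdef] at h
    linarith only [h]
  have hδqkk : δ ≤ (qk^k)⁻¹ * (1/1000) := by
    have h11 : (1000:ℝ) ≤ qk^((m+1)*k+3) := by
      have e : 11 ≤ (m+1)*k+3 := by
        have : 2*4 ≤ (m+1)*k := Nat.mul_le_mul (by omega) hk
        omega
      have h1 : (1000:ℝ) ≤ (19/10)^11 := by norm_num
      have h2 : ((19:ℝ)/10)^11 ≤ (19/10)^((m+1)*k+3) := pow_le_pow_right₀ (by norm_num) e
      have h3 : ((19:ℝ)/10)^((m+1)*k+3) ≤ qk^((m+1)*k+3) := pow_le_pow_left₀ (by norm_num) hqk19 _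
      linarith only [h1, h2, h3]
    have hinv3 : (qk^((m+1)*k+3))⁻¹ ≤ 1/1000 := by
      rw [← one_div]
      exact div_le_div_of_nonneg_left (by norm_num) (by norm_num) h11
    calc δ ≤ (qk^N)⁻¹ := hclose'.le
      _ = (qk^k)⁻¹ * (qk^((m+1)*k+3))⁻¹ := by
          rw [← mul_inv, ← pow_add, show k + ((m+1)*k+3) = N by rw [hN]; ring]
      _ ≤ (qk^k)⁻¹ * (1/1000) := mul_le_mul_of_nonneg_left hinv3 (by positivity)
  have hEeq : 1/(q-1) - 1 = (2-q) + (2-q)^2/(q-1) := by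
    have hne : q - 1 ≠ 0 := by linarith only [hq1]
    field_simp
    ring
  have h2q_lo : (98/100)*κ ≤ 2 - q := by
    have h1 : (qk^k)⁻¹ - δ ≤ 2 - q := by linarith only [hd1, h2qk.le, h2qk.ge]
    linarith only [h1, hδqkk, hqkk_lo, hκ0]
  have h2q_up : 2 - q ≤ (101/100)*κ := by
    have h1 : 2 - q ≤ (qk^k)⁻¹ + δ := by linarith only [hd2, h2qk.le, h2qk.ge]
    linarith only [h1, hδqkk, hqkk_up, hκ0]
  have hE1 : (98/100)*κ ≤ 1/(q-1) - 1 := by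
    rw [hEeq]
    have h0 : 0 ≤ (2-q)^2/(q-1) := div_nonneg (sq_nonneg _) (by linarith only [hq1])
    linarith only [h2q_lo, h0]
  have hE2 : 1/(q-1) - 1 ≤ (113/100)*κ := by
    rw [hEeq]
    have hq9 : (9:ℝ)/10 ≤ q - 1 := by linarith only [hq19]
    have h2q0 : (0:ℝ) ≤ 2 - q := by linarith only [hq2]
    have hsq : (2-q)^2/(q-1) ≤ (2-q)^2/(9/10) :=
      div_le_div_of_nonneg_left (sq_nonneg _) (by norm_num) hq9
    have hsq2 : (2-q)^2 ≤ ((101/100)*κ)^2 := by nlinarith only [h2q_up, h2q0, hκ0]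
    have hκsq : κ*κ ≤ κ*(1/13) := mul_le_mul_of_nonneg_left hκ13 hκ0.le
    nlinarith only [hsq, hsq2, hκsq, h2q_up]
  -- G value and bounds
  have hGval : G = q^2 * P * κ := by
    rw [hGdef, piQ_seqG_eq hq1' hk, ← hPdef, hκdef]
    rw [div_eq_iff (by positivity : (q:ℝ)^(k-2) ≠ 0)]
    have hqq : q^2 * q^(k-2) = q^k := by
      rw [← pow_add]
      congr 1
      omega
    have hck : q^2 * (q^k)⁻¹ * q^(k-2) = 1 := by
      rw [show q^2 * (q^k)⁻¹ * q^(k-2) = (q^2*q^(k-2))*(q^k)⁻¹ by ring, hqq,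
        mul_inv_cancel₀ (by positivity : (q:ℝ)^k ≠ 0)]
    linear_combination (-P) * hck
  have hq361 : (361/100 : ℝ) ≤ q^2 := by nlinarith only [hq19]
  have hq4 : q^2 ≤ 4 := by nlinarith only [hq2, hq0]
  have hqP1 : (357/100:ℝ) ≤ q^2 * P := by nlinarith only [hq361, hP99]
  have hqP2 : q^2 * P ≤ 404/100 := by nlinarith only [hq4, hP99, hP101, hq361]
  have hG1 : (357/100)*κ ≤ G := by
    rw [hGval]
    nlinarith only [hqP1, hκ0]
  have hG2 : G ≤ (404/100)*κ := by
    rw [hGval]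
    nlinarith only [hqP2, hκ0]
  -- iterate formulas
  have hiter : ∀ i x, (gMap q k)^[i] x = (x - P)/q^(i*k) + P := by
    intro i x
    rw [hPdef]
    exact gMap_iterate hq1' hk i x
  have hL0 : L 0 = 1 := by
    rw [hL 0]
    simp
  have hLi : ∀ i, L i = (1-P) * (q^(i*k))⁻¹ + P := by
    intro i
    rw [hL i, hiter i 1, div_eq_mul_inv]
  have hLm : L m = (1-P)*s + P := by rw [hLi m, hsdef]
  have hRi : ∀ i, R i = L i + s * G := by
    intro i
    rw [hR i, hiter i _, hLi i]
    have hz : (q ^ (-(((m:ℤ) - (i:ℤ)) * (k:ℤ))) : ℝ) * (q^(i*k))⁻¹ = s := by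
      rw [hsdef, ← zpow_natCast q (i*k), ← zpow_natCast q (m*k), ← zpow_neg, ← zpow_neg,
        ← zpow_add₀ (ne_of_gt hq0)]
      congr 1
      push_cast
      ring
    calc (1 + q ^ (-(((m:ℤ) - (i:ℤ)) * (k:ℤ))) * G - P)/q^(i*k) + P
        = ((1-P) * (q^(i*k))⁻¹ + P) + (q ^ (-(((m:ℤ) - (i:ℤ)) * (k:ℤ))) * (q^(i*k))⁻¹) * G := by
          rw [div_eq_mul_inv]
          ring
      _ = ((1-P) * (q^(i*k))⁻¹ + P) + s * G := by rw [hz]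
  have hR0v : R 0 = 1 + s*G := by rw [hRi 0, hL0]
  have hRmv : R m = ((1-P)*s + P) + s*G := by rw [hRi m, hLm]
  have hLQv : LQ = ((1/(q-1) - 1) + (1-P) - G)*s + P := by
    rw [hLQ, hiter m _, piQ_seqH_eq hq1' hk, ← hGdef, hsdef, div_eq_mul_inv]
    ring
  have hRQv : RQ = ((1/(q-1) - 1) + (1-P))*s + P := by
    rw [hRQ, hiter m _, hsdef, div_eq_mul_inv]
    ring
  have hDqv : Dq = s * G := by
    rw [hD]
    have hz : (q:ℝ) ^ (-(((m:ℤ)+1)*(k:ℤ))+2) = q^(2:ℕ) * ((q^(m*k))⁻¹ * (q^k)⁻¹) := by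
      rw [← zpow_natCast q 2, ← zpow_natCast q (m*k), ← zpow_natCast q k, ← zpow_neg,
        ← zpow_neg, ← zpow_add₀ (ne_of_gt hq0), ← zpow_add₀ (ne_of_gt hq0)]
      congr 1
      push_cast
      ring
    rw [hz, hGval, ← hsdef, ← hκdef]
    ring
  have hu1' : -((7/100)*(κ*s)) ≤ 1 - P := (abs_le.1 husκ).1
  have hu2' : 1 - P ≤ (7/100)*(κ*s) := (abs_le.1 husκ).2
  set A := max (L 0) (max (L m) LQ) with hAdef
  set B := min (R 0) (min (R m) RQ) with hBdef
  have hABkey : A + s*G/8 < B := by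
    rw [hAdef, hBdef, hL0, hLm, hLQv, hR0v, hRmv, hRQv]
    exact interval_leaves hs0 hs1 hκ0 hu1' hu2' hG1 hG2 hE1 hE2
  -- interval inclusion
  have hρ : ∀ i, i ≤ m → s ≤ (q^(i*k))⁻¹ ∧ (q^(i*k))⁻¹ ≤ 1 := by
    intro i him
    constructor
    · rw [hsdef]
      exact inv_anti₀ (by positivity)
        (pow_le_pow_right₀ (by linarith only [hq1]) (Nat.mul_le_mul_right k him))
    · exact inv_le_one_of_one_le₀ (one_le_pow₀ (by linarith only [hq1]))
  have hLiA : ∀ i, i ≤ m → L i ≤ A := by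
    intro i him
    obtain ⟨hρ1, hρ2⟩ := hρ i him
    rcases le_or_gt 0 (1-P) with hu0 | hu0
    · have hle : L i ≤ L 0 := by
        rw [hLi i, hL0]
        have h1 := mul_le_mul_of_nonneg_left hρ2 hu0
        linarith only [h1]
      exact le_trans hle (le_max_left _ _)
    · have hle : L i ≤ L m := by
        rw [hLi i, hLm]
        have h1 := mul_le_mul_of_nonpos_left hρ1 hu0.le
        linarith only [h1]
      exact le_trans hle (le_trans (le_max_left _ _) (le_max_right _ _))
  have hBRi : ∀ i, i ≤ m → B ≤ R i := by
    intro i him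
    obtain ⟨hρ1, hρ2⟩ := hρ i him
    rw [hRi i]
    rcases le_or_gt 0 (1-P) with hu0 | hu0
    · have h1 : L m ≤ L i := by
        rw [hLi i, hLm]
        have h2 := mul_le_mul_of_nonneg_left hρ1 hu0
        linarith only [h2]
      have h2 : B ≤ R m := le_trans (min_le_right _ _) (min_le_left _ _)
      rw [hRi m] at h2
      linarith only [h1, h2]
    · have h1 : L 0 ≤ L i := by
        rw [hLi i, hL0]
        have h2 := mul_le_mul_of_nonpos_left hρ2 hu0.le
        linarith only [h2]
      have h2 : B ≤ R 0 := min_le_left _ _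
      rw [hRi 0] at h2
      linarith only [h1, h2]
  have hLQA : LQ ≤ A := le_trans (le_max_right _ _) (le_max_right _ _)
  have hBRQ : B ≤ RQ := le_trans (min_le_right _ _) (min_le_right _ _)
  have hsub : Set.Icc A B ⊆ Bq := by
    rw [hB]
    rintro x ⟨hxA, hxB⟩
    constructor
    · simp only [Set.mem_iInter]
      intro i hi
      have him : i ≤ m := by
        rw [Finset.mem_Icc] at hi
        exact hi.2
      exact ⟨le_trans (hLiA i him) hxA, le_trans hxB (hBRi i him)⟩
    · exact ⟨le_trans hLQA hxA, le_trans hxB hBRQ⟩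
  -- volume estimates
  have hGpos : 0 < G := lt_of_lt_of_le (by positivity) hG1
  have h0sG : 0 < s*G := mul_pos hs0 hGpos
  have hDq0 : 0 < Dq := by rw [hDqv]; exact h0sG
  have hAB : A < B := by linarith only [hABkey, h0sG]
  have hfin : MeasureTheory.volume Bq ≠ ⊤ := by
    have hsub2 : Bq ⊆ Set.Icc LQ RQ := by
      rw [hB]
      exact Set.inter_subset_right
    have hm2 : MeasureTheory.volume Bq ≤ MeasureTheory.volume (Set.Icc LQ RQ) :=
      MeasureTheory.measure_mono hsub2
    rw [Real.volume_Icc] at hm2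
    exact ne_top_of_le_ne_top ENNReal.ofReal_ne_top hm2
  have hvol : B - A ≤ (MeasureTheory.volume Bq).toReal := by
    have h1 : MeasureTheory.volume (Set.Icc A B) ≤ MeasureTheory.volume Bq :=
      MeasureTheory.measure_mono hsub
    rw [Real.volume_Icc] at h1
    have h2 := ENNReal.toReal_mono hfin h1
    rwa [ENNReal.toReal_ofReal (by linarith only [hAB] : (0:ℝ) ≤ B - A)] at h2
  rw [hβ]
  apply lt_min (by norm_num)
  rw [lt_div_iff₀ hDq0]
  have hfinal : Dq/8 < B - A := by
    rw [hDqv]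
    linarith only [hABkey]
  linarith only [hvol, hfinal, hDq0]
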